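/- The Aronsson function u(x, y) = |x|^{4/3} − |y|^{4/3} on ℝ² satisfies Δ_∞ u(x,y) = 0 at every point (x,y) with x ≠ 0 and y ≠ 0; i.e., u is infinity harmonic away from the coordinate axes. -/

import Mathlib

open Matrix

noncomputable section

/-- Outer product `v ⊗ w = v wᵀ` as a matrix. -/
def outer {d : ℕ} (v w : EuclideanSpace ℝ (Fin d)) : Matrix (Fin d) (Fin d) ℝ :=
  fun i j => v i * w j

/-- Frobenius inner product `⟨X, Y⟩_F = tr(Xᵀ Y)`. -/
def frob {d : ℕ} (X Y : Matrix (Fin d) (Fin d) ℝ) : ℝ := (Xᵀ * Y).trace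

/-- Hessian matrix `D²u(x)` of `u` at `x`. -/
def hess {d : ℕ} (u : EuclideanSpace ℝ (Fin d) → ℝ) (x : EuclideanSpace ℝ (Fin d)) :
    Matrix (Fin d) (Fin d) ℝ :=
  fun i j =>
    fderiv ℝ (fun y => fderiv ℝ u y (EuclideanSpace.single j 1)) x (EuclideanSpace.single i 1)

/-- The infinity Laplacian `Δ_∞ u (x) = ⟨∇u ⊗ ∇u, D²u⟩_F / ‖∇u‖²`. -/
def infLap {d : ℕ} (u : EuclideanSpace ℝ (Fin d) → ℝ) (x : EuclideanSpace ℝ (Fin d)) : ℝ :=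
  frob (outer (gradient u x) (gradient u x)) (hess u x) / ‖gradient u x‖ ^ 2

/-! ### Auxiliary one-dimensional computations -/

/-- `fA t = |t|^{4/3}`, written as `(t²)^{2/3}` to ease differentiation. -/
def fA (t : ℝ) : ℝ := (t ^ 2) ^ ((2:ℝ)/3)
/-- First derivative of `fA` (away from `0`). -/
def fA1 (t : ℝ) : ℝ := (4/3) * t * (t ^ 2) ^ (-(1:ℝ)/3)
/-- Second derivative of `fA` (away from `0`). -/
def fA2 (t : ℝ) : ℝ := (4/9) * (t ^ 2) ^ (-(1:ℝ)/3)

lemma fA_eq (t : ℝ) : |t| ^ ((4:ℝ)/3) = fA t := by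
  rw [fA, ← sq_abs, ← Real.rpow_natCast |t| 2, ← Real.rpow_mul (abs_nonneg t)]
  norm_num

lemma sq_hasDerivAt (t : ℝ) : HasDerivAt (fun s : ℝ => s ^ 2) (2 * t) t := by
  simpa [mul_comm] using hasDerivAt_pow 2 t

lemma hfA1 {t : ℝ} (ht : t ≠ 0) : HasDerivAt fA (fA1 t) t := by
  have h := (sq_hasDerivAt t).rpow_const (p := (2:ℝ)/3) (Or.inl (pow_ne_zero 2 ht))
  refine h.congr_deriv ?_
  rw [show (2:ℝ)/3 - 1 = -(1:ℝ)/3 by norm_num]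
  unfold fA1
  ring

lemma hfA2 {t : ℝ} (ht : t ≠ 0) : HasDerivAt fA1 (fA2 t) t := by
  have hpos : (0:ℝ) < t ^ 2 := by positivity
  have hg : HasDerivAt (fun s : ℝ => (s ^ 2) ^ (-(1:ℝ)/3))
      ((2 * t) * (-(1:ℝ)/3) * (t ^ 2) ^ (-(1:ℝ)/3 - 1)) t :=
    (sq_hasDerivAt t).rpow_const (Or.inl (pow_ne_zero 2 ht))
  have hc : HasDerivAt (fun s : ℝ => (4/3 : ℝ) * s) (4/3) t := by
    simpa using (hasDerivAt_id t).const_mul (4/3 : ℝ)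
  have h := hc.mul hg
  refine h.congr_deriv ?_
  unfold fA2
  have h1 : (t ^ 2) ^ (-(1:ℝ)/3 - 1) = (t ^ 2) ^ (-(1:ℝ)/3) * (t ^ 2)⁻¹ := by
    rw [← Real.rpow_neg_one (t ^ 2), ← Real.rpow_add hpos, sub_eq_add_neg]
  rw [h1]
  field_simp
  ring

lemma keyA {t : ℝ} (ht : t ≠ 0) : fA1 t ^ 2 * fA2 t = 64/81 := by
  have hpos : (0:ℝ) < t ^ 2 := by positivity
  have h1 : ((t ^ 2) ^ (-(1:ℝ)/3)) ^ 2 * ((t ^ 2) ^ (-(1:ℝ)/3)) = (t ^ 2)⁻¹ := by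
    rw [← Real.rpow_natCast ((t ^ 2) ^ (-(1:ℝ)/3)) 2, ← Real.rpow_mul hpos.le,
      ← Real.rpow_add hpos]
    norm_num [Real.rpow_neg_one]
  unfold fA1 fA2
  have h2 : (4/3 * t * (t ^ 2) ^ (-(1:ℝ)/3)) ^ 2 * (4/9 * (t ^ 2) ^ (-(1:ℝ)/3))
      = 64/81 * (t ^ 2 * (((t ^ 2) ^ (-(1:ℝ)/3)) ^ 2 * ((t ^ 2) ^ (-(1:ℝ)/3)))) := by ring
  rw [h2, h1, mul_inv_cancel₀ hpos.ne', mul_one]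

/-! ### The two-dimensional Aronsson function -/

/-- The Aronsson function, written via `fA`. -/
def uA (q : EuclideanSpace ℝ (Fin 2)) : ℝ := fA (q 0) - fA (q 1)

/-- Its Fréchet derivative. -/
def DA (q : EuclideanSpace ℝ (Fin 2)) : EuclideanSpace ℝ (Fin 2) →L[ℝ] ℝ :=
  fA1 (q 0) • EuclideanSpace.proj 0 - fA1 (q 1) • EuclideanSpace.proj 1

lemma proj_hasFDerivAt (i : Fin 2) (q : EuclideanSpace ℝ (Fin 2)) :
    HasFDerivAt (fun y : EuclideanSpace ℝ (Fin 2) => y i)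
      (EuclideanSpace.proj (𝕜 := ℝ) i) q :=
  (EuclideanSpace.proj (𝕜 := ℝ) i).hasFDerivAt

lemma huA {q : EuclideanSpace ℝ (Fin 2)} (h0 : q 0 ≠ 0) (h1 : q 1 ≠ 0) :
    HasFDerivAt uA (DA q) q := by
  have H0 := (hfA1 h0).comp_hasFDerivAt q (proj_hasFDerivAt 0 q)
  have H1 := (hfA1 h1).comp_hasFDerivAt q (proj_hasFDerivAt 1 q)
  exact H0.sub H1

lemma fderiv_uA {q : EuclideanSpace ℝ (Fin 2)} (h0 : q 0 ≠ 0) (h1 : q 1 ≠ 0) :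
    fderiv ℝ uA q = DA q := (huA h0 h1).fderiv

lemma DA_apply (q : EuclideanSpace ℝ (Fin 2)) (v : EuclideanSpace ℝ (Fin 2)) :
    DA q v = fA1 (q 0) * v 0 - fA1 (q 1) * v 1 := by
  simp [DA, smul_eq_mul]

/-- The Aronsson function `u(x,y) = |x|^{4/3} - |y|^{4/3}` is infinity harmonic away from the
coordinate axes. -/
theorem aronsson_infinity_harmonic (p : EuclideanSpace ℝ (Fin 2))
    (hx : p 0 ≠ 0) (hy : p 1 ≠ 0) :
    infLap (fun q : EuclideanSpace ℝ (Fin 2) => |q 0| ^ ((4 : ℝ) / 3) - |q 1| ^ ((4 : ℝ) / 3))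
      p = 0 := by
  have hu : (fun q : EuclideanSpace ℝ (Fin 2) =>
      |q 0| ^ ((4 : ℝ) / 3) - |q 1| ^ ((4 : ℝ) / 3)) = uA := by
    funext q; rw [uA, fA_eq, fA_eq]
  rw [hu]
  -- neighborhood where both coordinates are nonzero
  have hnb : ∀ᶠ y in nhds p, y 0 ≠ 0 ∧ y 1 ≠ 0 := by
    have c0 : ContinuousAt (fun y : EuclideanSpace ℝ (Fin 2) => y 0) p :=
      (EuclideanSpace.proj (𝕜 := ℝ) (0 : Fin 2)).continuous.continuousAt
    have c1 : ContinuousAt (fun y : EuclideanSpace ℝ (Fin 2) => y 1) p :=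
      (EuclideanSpace.proj (𝕜 := ℝ) (1 : Fin 2)).continuous.continuousAt
    exact (c0.eventually_ne hx).and (c1.eventually_ne hy)
  -- gradient components
  have hgrad : ∀ i : Fin 2, gradient uA p i = DA p (EuclideanSpace.single i 1) := by
    intro i
    have h1 : (inner ℝ (gradient uA p) (EuclideanSpace.single i (1:ℝ)) : ℝ)
        = fderiv ℝ uA p (EuclideanSpace.single i 1) := by
      rw [gradient]
      exact InnerProductSpace.toDual_symm_apply
    rw [EuclideanSpace.inner_single_right] at h1
    simp only [RCLike.conj_to_real, one_mul, starRingEnd_apply, star_trivial] at h1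
    rw [h1, fderiv_uA hx hy]
  -- Hessian entries
  have hhess : ∀ i j : Fin 2, hess uA p i j
      = fA2 (p 0) * (EuclideanSpace.single j (1:ℝ)) 0 * (EuclideanSpace.single i (1:ℝ)) 0
        - fA2 (p 1) * (EuclideanSpace.single j (1:ℝ)) 1 * (EuclideanSpace.single i (1:ℝ)) 1 := by
    intro i j
    have heq : (fun y => fderiv ℝ uA y (EuclideanSpace.single j 1)) =ᶠ[nhds p]
        (fun y => fA1 (y 0) * (EuclideanSpace.single j (1:ℝ)) 0
          - fA1 (y 1) * (EuclideanSpace.single j (1:ℝ)) 1) := by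
      filter_upwards [hnb] with y hy2
      rw [fderiv_uA hy2.1 hy2.2, DA_apply]
    have hD : HasFDerivAt
        (fun y : EuclideanSpace ℝ (Fin 2) => fA1 (y 0) * (EuclideanSpace.single j (1:ℝ)) 0
          - fA1 (y 1) * (EuclideanSpace.single j (1:ℝ)) 1)
        (((EuclideanSpace.single j (1:ℝ)) 0 * fA2 (p 0)) •
            (EuclideanSpace.proj 0 : EuclideanSpace ℝ (Fin 2) →L[ℝ] ℝ)
          - ((EuclideanSpace.single j (1:ℝ)) 1 * fA2 (p 1)) •
            (EuclideanSpace.proj 1 : EuclideanSpace ℝ (Fin 2) →L[ℝ] ℝ)) p := by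
      have H0 := HasFDerivAt.mul_const (𝕜 := ℝ)
        ((hfA2 hx).comp_hasFDerivAt p (proj_hasFDerivAt 0 p))
        ((EuclideanSpace.single j (1:ℝ)) 0)
      have H1 := HasFDerivAt.mul_const (𝕜 := ℝ)
        ((hfA2 hy).comp_hasFDerivAt p (proj_hasFDerivAt 1 p))
        ((EuclideanSpace.single j (1:ℝ)) 1)
      have := H0.sub H1
      refine this.congr_fderiv ?_
      ext v
      simp [smul_eq_mul]
    rw [hess, heq.fderiv_eq, hD.fderiv]
    simp only [ContinuousLinearMap.coe_sub', Pi.sub_apply, ContinuousLinearMap.coe_smul',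
      Pi.smul_apply, smul_eq_mul, PiLp.proj, PiLp.projₗ, ContinuousLinearMap.coe_mk',
      LinearMap.coe_mk, AddHom.coe_mk, LinearMap.coe_comp, Function.comp_apply,
      LinearMap.proj_apply, LinearEquiv.coe_coe, WithLp.linearEquiv_apply,
      AddEquiv.toFun_eq_coe, WithLp.coe_addEquiv, Pi.single_apply, EuclideanSpace.single_apply]
    ring
  -- now compute
  rw [infLap, frob]
  have hnum : ((outer (gradient uA p) (gradient uA p))ᵀ * hess uA p).trace = 0 := by
    have g0 : gradient uA p 0 = fA1 (p 0) := by
      rw [hgrad 0, DA_apply]; simp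
    have g1 : gradient uA p 1 = -fA1 (p 1) := by
      rw [hgrad 1, DA_apply]; simp
    have h00 : hess uA p 0 0 = fA2 (p 0) := by rw [hhess 0 0]; simp
    have h01 : hess uA p 0 1 = 0 := by rw [hhess 0 1]; simp
    have h10 : hess uA p 1 0 = 0 := by rw [hhess 1 0]; simp
    have h11 : hess uA p 1 1 = -fA2 (p 1) := by rw [hhess 1 1]; simp
    have expand : ((outer (gradient uA p) (gradient uA p))ᵀ * hess uA p).trace
        = gradient uA p 0 * gradient uA p 0 * hess uA p 0 0
          + gradient uA p 1 * gradient uA p 0 * hess uA p 1 0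
          + (gradient uA p 0 * gradient uA p 1 * hess uA p 0 1
          + gradient uA p 1 * gradient uA p 1 * hess uA p 1 1) := by
      simp [Matrix.trace, Matrix.mul_apply, outer, Fin.sum_univ_two]
    rw [expand, g0, g1, h00, h01, h10, h11]
    have k0 := keyA hx
    have k1 := keyA hy
    nlinarith [k0, k1]
  rw [hnum, zero_div]

end
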